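/- Fix r ≥ 1 and C > 0. Let u₁, …, u_r ∈ ℝⁿ be linearly independent vectors spanning a lattice Λ with determinant d(Λ) (the r-dimensional volume of the parallelepiped they span), and suppose d(Λ) ≥ C|u₁|⋯|u_r|. Then there is a constant c = c(r, C) > 0 such that for all real a₁, …, a_r, |∑_{j=1}^r a_j u_j|² ≥ c · ∑_{j=1}^r a_j² |u_j|². -/

import Mathlib

open Finset

section aux
open Matrix
open InnerProductSpace
open scoped RealInnerProductSpace

instance fin_wf (k : ℕ) : WellFoundedLT (Fin (k+1)) := inferInstance

variable {E : Type*} [NormedAddCommGroup E] [InnerProductSpace ℝ E] {m : ℕ}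

lemma gs_span_inner_zero (v : Fin (m+1) → E) (j : Fin (m+1)) {w : E}
    (hw : w ∈ Submodule.span ℝ (gramSchmidt ℝ v '' Set.Iio j)) :
    ⟪w, gramSchmidt ℝ v j⟫ = 0 := by
  induction hw using Submodule.span_induction with
  | mem x hx =>
    obtain ⟨i, hi, rfl⟩ := hx
    exact gramSchmidt_orthogonal ℝ v (ne_of_lt hi)
  | zero => simp
  | add x y _ _ hx hy => rw [inner_add_left, hx, hy]; ring
  | smul c x _ hx => rw [inner_smul_left, hx]; simp

lemma gs_sub_mem (v : Fin (m+1) → E) (j : Fin (m+1)) :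
    v j - gramSchmidt ℝ v j ∈ Submodule.span ℝ (gramSchmidt ℝ v '' Set.Iio j) := by
  have h := gramSchmidt_def'' ℝ v j
  have h2 : v j - gramSchmidt ℝ v j = ∑ i ∈ Finset.Iio j,
      (⟪gramSchmidt ℝ v i, v j⟫ / (‖gramSchmidt ℝ v i‖ : ℝ) ^ 2) • gramSchmidt ℝ v i := by
    conv_lhs => rw [h]
    abel
  rw [h2]
  refine Submodule.sum_mem _ fun i hi => Submodule.smul_mem _ _ ?_
  exact Submodule.subset_span ⟨i, Finset.mem_Iio.mp hi, rfl⟩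

lemma inner_v_gs_self (v : Fin (m+1) → E) (j : Fin (m+1)) :
    ⟪v j, gramSchmidt ℝ v j⟫ = ‖gramSchmidt ℝ v j‖ ^ 2 := by
  have h1 : v j = gramSchmidt ℝ v j + (v j - gramSchmidt ℝ v j) := by abel
  rw [h1, inner_add_left, gs_span_inner_zero v j (gs_sub_mem v j),
    real_inner_self_eq_norm_sq]
  ring

lemma inner_v_gs_zero (v : Fin (m+1) → E) {i j : Fin (m+1)} (hij : i < j) :
    ⟪v i, gramSchmidt ℝ v j⟫ = 0 := by
  refine gs_span_inner_zero v j ?_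
  have h1 : v i ∈ Submodule.span ℝ (gramSchmidt ℝ v '' Set.Iic i) :=
    mem_span_gramSchmidt ℝ v le_rfl
  refine Submodule.span_mono (Set.image_mono (f := _) fun x hx => ?_) h1
  exact lt_of_le_of_lt (Set.mem_Iic.mp hx) hij

lemma norm_gs_le (v : Fin (m+1) → E) (j : Fin (m+1)) :
    ‖gramSchmidt ℝ v j‖ ≤ ‖v j‖ := by
  have h1 : v j = gramSchmidt ℝ v j + (v j - gramSchmidt ℝ v j) := by abel
  have h2 : ‖v j‖ ^ 2 = ‖gramSchmidt ℝ v j‖ ^ 2 + ‖v j - gramSchmidt ℝ v j‖ ^ 2 := by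
    calc ‖v j‖ ^ 2 = ‖gramSchmidt ℝ v j + (v j - gramSchmidt ℝ v j)‖ ^ 2 := by rw [← h1]
      _ = _ := by
          rw [norm_add_sq_real, real_inner_comm, gs_span_inner_zero v j (gs_sub_mem v j)]
          ring
  nlinarith [norm_nonneg (v j), norm_nonneg (gramSchmidt ℝ v j),
    sq_nonneg ‖v j - gramSchmidt ℝ v j‖]

noncomputable def Lmat (v : Fin (m+1) → E) : Matrix (Fin (m+1)) (Fin (m+1)) ℝ :=
  Matrix.of fun n i => if i = n then 1 else if i < n then
    ⟪gramSchmidt ℝ v i, v n⟫ / ‖gramSchmidt ℝ v i‖ ^ 2 else 0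

lemma v_eq_sum (v : Fin (m+1) → E) (n : Fin (m+1)) :
    v n = ∑ i, Lmat v n i • gramSchmidt ℝ v i := by
  have hv : ∀ i ∈ Finset.univ, i ∉ Finset.Iic n → Lmat v n i • gramSchmidt ℝ v i = 0 := by
    intro i _ hi
    have h1 : ¬ i ≤ n := by simpa using hi
    have hz : Lmat v n i = 0 := by
      simp only [Lmat, Matrix.of_apply]
      rw [if_neg (by rintro rfl; exact h1 le_rfl), if_neg (fun h => h1 (le_of_lt h))]
    rw [hz, zero_smul]
  rw [← Finset.sum_subset (Finset.subset_univ (Finset.Iic n)) hv,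
    ← Finset.Iio_insert, Finset.sum_insert (by simp)]
  have hnn : Lmat v n n = 1 := by simp [Lmat]
  rw [hnn, one_smul]
  have hc : ∀ i ∈ Finset.Iio n, Lmat v n i • gramSchmidt ℝ v i
      = (⟪gramSchmidt ℝ v i, v n⟫ / ‖gramSchmidt ℝ v i‖ ^ 2) • gramSchmidt ℝ v i := by
    intro i hi
    have hi' : i < n := Finset.mem_Iio.mp hi
    simp [Lmat, hi', ne_of_lt hi']
  rw [Finset.sum_congr rfl hc]
  exact_mod_cast gramSchmidt_def'' ℝ v n

lemma det_gram (v : Fin (m+1) → E) :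
    (Matrix.of fun i j => (⟪v i, v j⟫ : ℝ)).det = ∏ i, ‖gramSchmidt ℝ v i‖ ^ 2 := by
  have hG : (Matrix.of fun i j => (⟪v i, v j⟫ : ℝ)) =
      Lmat v * Matrix.diagonal (fun i => ‖gramSchmidt ℝ v i‖ ^ 2) * (Lmat v)ᵀ := by
    ext n p
    rw [Matrix.mul_apply]
    simp only [Matrix.mul_diagonal, Matrix.transpose_apply, Matrix.of_apply]
    rw [v_eq_sum v n, v_eq_sum v p, sum_inner]
    simp only [inner_sum, real_inner_smul_left, real_inner_smul_right]
    refine Finset.sum_congr rfl fun i _ => ?_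
    rw [Finset.sum_eq_single i]
    · rw [real_inner_self_eq_norm_sq]; ring
    · intro j _ hji
      rw [gramSchmidt_orthogonal ℝ v (Ne.symm hji)]; ring
    · intro h; exact absurd (Finset.mem_univ i) h
  rw [hG, Matrix.det_mul, Matrix.det_mul, Matrix.det_transpose, Matrix.det_diagonal]
  have hL : (Lmat v).det = 1 := by
    rw [Matrix.det_of_lowerTriangular (Lmat v)
      (by intro i j hij
          have h1 : i < j := hij
          simp only [Lmat, Matrix.of_apply]
          rw [if_neg (ne_of_gt h1), if_neg (lt_asymm h1)])]
    simp [Lmat]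
  rw [hL]; ring

lemma key_ineq (C : ℝ) (hC : 0 < C) (v : Fin (m+1) → E) (hv : LinearIndependent ℝ v)
    (hd : C * ∏ j, ‖v j‖ ≤ Real.sqrt ((Matrix.of fun i j => (⟪v i, v j⟫ : ℝ)).det))
    (b : Fin (m+1) → ℝ) :
    C ^ 2 * (b (Fin.last m)) ^ 2 * ‖v (Fin.last m)‖ ^ 2 ≤ ‖∑ j, b j • v j‖ ^ 2 := by
  set g := gramSchmidt ℝ v with hg
  have hsqrt : Real.sqrt ((Matrix.of fun i j => (⟪v i, v j⟫ : ℝ)).det) = ∏ i, ‖g i‖ := by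
    rw [det_gram v, ← hg, Finset.prod_pow]
    exact Real.sqrt_sq (Finset.prod_nonneg fun i _ => norm_nonneg _)
  rw [hsqrt] at hd
  have hP : (0:ℝ) < ∏ i : Fin m, ‖v i.castSucc‖ :=
    Finset.prod_pos fun i _ => norm_pos_iff.mpr (hv.ne_zero _)
  have hglast : (0:ℝ) < ‖g (Fin.last m)‖ :=
    norm_pos_iff.mpr (gramSchmidt_ne_zero _ hv)
  have hprodv : ∏ j, ‖v j‖ = (∏ i : Fin m, ‖v i.castSucc‖) * ‖v (Fin.last m)‖ :=
    Fin.prod_univ_castSucc _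
  have hprodg : ∏ i, ‖g i‖ ≤ (∏ i : Fin m, ‖v i.castSucc‖) * ‖g (Fin.last m)‖ := by
    rw [Fin.prod_univ_castSucc (fun i => ‖g i‖)]
    refine mul_le_mul_of_nonneg_right ?_ (norm_nonneg _)
    exact Finset.prod_le_prod (fun i _ => norm_nonneg _) (fun i _ => norm_gs_le v _)
  have h3 : C * ‖v (Fin.last m)‖ ≤ ‖g (Fin.last m)‖ := by
    have := hd.trans hprodg
    rw [hprodv] at this
    nlinarith [hP]
  have hinner : ⟪∑ j, b j • v j, g (Fin.last m)⟫ = b (Fin.last m) * ‖g (Fin.last m)‖ ^ 2 := by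
    rw [sum_inner]
    simp only [real_inner_smul_left]
    rw [Finset.sum_eq_single (Fin.last m)]
    · rw [inner_v_gs_self]
    · intro j _ hj
      rw [inner_v_gs_zero v (lt_of_le_of_ne (Fin.le_last j) hj)]; ring
    · intro h; exact absurd (Finset.mem_univ _) h
  have hcs : |⟪∑ j, b j • v j, g (Fin.last m)⟫| ≤ ‖∑ j, b j • v j‖ * ‖g (Fin.last m)‖ :=
    abs_real_inner_le_norm _ _
  rw [hinner, abs_mul, abs_of_nonneg (sq_nonneg _ : (0:ℝ) ≤ ‖g (Fin.last m)‖ ^ 2)] at hcs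
  have h4 : |b (Fin.last m)| * ‖g (Fin.last m)‖ ≤ ‖∑ j, b j • v j‖ := by
    nlinarith [hglast, abs_nonneg (b (Fin.last m))]
  have h5 : C * (|b (Fin.last m)| * ‖v (Fin.last m)‖) ≤ ‖∑ j, b j • v j‖ := by
    nlinarith [abs_nonneg (b (Fin.last m)), hC.le, norm_nonneg (v (Fin.last m))]
  calc C ^ 2 * (b (Fin.last m)) ^ 2 * ‖v (Fin.last m)‖ ^ 2
      = (C * (|b (Fin.last m)| * ‖v (Fin.last m)‖)) ^ 2 := by
        rw [mul_pow, mul_pow, sq_abs]; ring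
    _ ≤ ‖∑ j, b j • v j‖ ^ 2 := by
        have hnn : 0 ≤ C * (|b (Fin.last m)| * ‖v (Fin.last m)‖) := by positivity
        nlinarith [h5, hnn]

end aux

/-- fix `r ≥ 1` and `C > 0`. If `u₁,…,u_r` are linearly independent
vectors spanning a lattice with determinant `d(Λ) ≥ C|u₁|⋯|u_r|`, then there is
`c = c(r,C) > 0` with `|∑ a_j u_j|² ≥ c ∑ a_j² |u_j|²` for all real `a_j`. -/
theorem almost_orthogonal_lower_bound (r : ℕ) (hr : 1 ≤ r) (C : ℝ) (hC : 0 < C) :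
    ∃ c : ℝ, 0 < c ∧ ∀ (n : ℕ) (u : Fin r → EuclideanSpace ℝ (Fin n)),
      LinearIndependent ℝ u →
      C * ∏ j, ‖u j‖ ≤
        Real.sqrt (Matrix.det (Matrix.of fun i j => (inner ℝ (u i) (u j) : ℝ))) →
      ∀ a : Fin r → ℝ,
        c * ∑ j, (a j) ^ 2 * ‖u j‖ ^ 2 ≤ ‖∑ j, a j • u j‖ ^ 2 := by
  obtain ⟨m, rfl⟩ : ∃ m, r = m + 1 := ⟨r - 1, by omega⟩
  refine ⟨C ^ 2 / (m + 1), by positivity, ?_⟩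
  intro n u hu hdet a
  have hj : ∀ j : Fin (m+1), C ^ 2 * (a j) ^ 2 * ‖u j‖ ^ 2 ≤ ‖∑ i, a i • u i‖ ^ 2 := by
    intro j
    set σ := Equiv.swap j (Fin.last m) with hσ
    have hv : LinearIndependent ℝ (u ∘ σ) := hu.comp σ σ.injective
    have hdet' : C * ∏ i, ‖(u ∘ σ) i‖ ≤
        Real.sqrt ((Matrix.of fun i k => (inner ℝ ((u ∘ σ) i) ((u ∘ σ) k) : ℝ)).det) := by
      have hprod : ∏ i, ‖(u ∘ σ) i‖ = ∏ i, ‖u i‖ := Equiv.prod_comp σ fun i => ‖u i‖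
      have hdeq : (Matrix.of fun i k => (inner ℝ ((u ∘ σ) i) ((u ∘ σ) k) : ℝ))
          = (Matrix.of fun i k => (inner ℝ (u i) (u k) : ℝ)).submatrix σ σ := rfl
      rw [hprod, hdeq, Matrix.det_submatrix_equiv_self]
      exact hdet
    have hkey := key_ineq C hC (u ∘ σ) hv hdet' (a ∘ σ)
    have hσl : σ (Fin.last m) = j := Equiv.swap_apply_right j (Fin.last m)
    have hsum : ∑ i, (a ∘ σ) i • (u ∘ σ) i = ∑ i, a i • u i :=
      Equiv.sum_comp σ fun i => a i • u i
    rw [hsum] at hkey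
    simpa [Function.comp, hσl] using hkey
  have hsum2 : ∑ j, C ^ 2 * (a j) ^ 2 * ‖u j‖ ^ 2
      ≤ ∑ _j : Fin (m+1), ‖∑ i, a i • u i‖ ^ 2 :=
    Finset.sum_le_sum fun j _ => hj j
  rw [Finset.sum_const, card_univ, Fintype.card_fin, nsmul_eq_mul] at hsum2
  have hT : ∑ j, C ^ 2 * (a j) ^ 2 * ‖u j‖ ^ 2
      = C ^ 2 * ∑ j, (a j) ^ 2 * ‖u j‖ ^ 2 := by
    rw [Finset.mul_sum]; exact Finset.sum_congr rfl fun j _ => by ring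
  rw [hT] at hsum2
  rw [div_mul_eq_mul_div, div_le_iff₀ (by positivity)]
  push_cast at hsum2 ⊢
  linarith
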